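/- Fix an integer q ≥ 2, finite types V, E, U, ZMod q-linear maps δ⁰ : (V → ZMod q) → (E → ZMod q) and δ¹ : (E → ZMod q) → (U → ZMod q) with δ¹ ∘ δ⁰ = 0, a real β, and p = 1 - e^{-β}. Then Σ_{f : E → ZMod q} exp(β · #{x ∈ U : δ¹ f x = 0}) = e^{β|U|} · Nat.card (range δ⁰) · Σ_{S ⊆ U} p^{|S|}(1-p)^{|U|-|S|} · Nat.card (Z¹_S / B¹), where Z¹_S = {f | ∀ x ∈ S, δ¹ f x = 0} and B¹ = range δ⁰ ≤ Z¹_S. (The Potts lattice gauge theory partition function equals, up to the explicit prefactor, the plaquette random-cluster partition function.) -/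
import Mathlib


/-- The Potts lattice gauge theory partition function equals, up to the explicit
prefactor `e^{β|U|} · |B¹|`, the plaquette random-cluster partition function:
`Σ_f exp(β · #{x : δ¹ f x = 0})
  = e^{β|U|} · |range δ⁰| · Σ_{S ⊆ U} p^{|S|}(1-p)^{|U|-|S|} · |Z¹_S / B¹|`. -/
theorem plgt_partition_eq_prcm_partition
    (q : ℕ) (hq : 2 ≤ q) [NeZero q] (V E U : Type*)
    [Fintype V] [DecidableEq E] [Fintype E] [Fintype U] [DecidableEq U]
    (δ0 : (V → ZMod q) →ₗ[ZMod q] (E → ZMod q))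
    (δ1 : (E → ZMod q) →ₗ[ZMod q] (U → ZMod q))
    (hδ : ∀ g : V → ZMod q, δ1 (δ0 g) = 0)
    (β p : ℝ) (hp : p = 1 - Real.exp (-β)) :
    ∑ f : E → ZMod q,
        Real.exp (β * ((Finset.univ.filter fun x => δ1 f x = 0).card : ℝ))
      = Real.exp (β * Fintype.card U) * (Nat.card (LinearMap.range δ0) : ℝ) *
          ∑ S : Finset U,
            p ^ S.card * (1 - p) ^ (Fintype.card U - S.card) *
              (Nat.card
                (↥(⨅ x ∈ S, LinearMap.ker ((LinearMap.proj x).comp δ1)) ⧸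
                  Submodule.comap
                    (⨅ x ∈ S, LinearMap.ker ((LinearMap.proj x).comp δ1)).subtype
                    (LinearMap.range δ0)) : ℝ) := by
  classical
  set Z : Finset U → Submodule (ZMod q) (E → ZMod q) :=
    fun S => ⨅ x ∈ S, LinearMap.ker ((LinearMap.proj x).comp δ1) with hZ
  have hmem : ∀ (S : Finset U) (f : E → ZMod q),
      f ∈ Z S ↔ ∀ x ∈ S, δ1 f x = 0 := by
    intro S f
    simp [hZ, Submodule.mem_iInf, LinearMap.mem_ker]
  have hle : ∀ S : Finset U, LinearMap.range δ0 ≤ Z S := by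
    intro S f hf
    obtain ⟨g, rfl⟩ := hf
    rw [hmem]
    intro x _
    rw [hδ g]; rfl
  -- cardinality splitting
  have hcard : ∀ S : Finset U,
      (Nat.card (Z S) : ℝ) =
        (Nat.card (LinearMap.range δ0) : ℝ) *
          (Nat.card (↥(Z S) ⧸
            Submodule.comap (Z S).subtype (LinearMap.range δ0)) : ℝ) := by
    intro S
    have h1 := Submodule.card_eq_card_quotient_mul_card
      (Submodule.comap (Z S).subtype (LinearMap.range δ0))
    have h2 : Nat.card (Submodule.comap (Z S).subtype (LinearMap.range δ0)) =
        Nat.card (LinearMap.range δ0) :=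
      Nat.card_congr (Submodule.comapSubtypeEquivOfLe (hle S)).toEquiv
    rw [h2] at h1
    exact_mod_cast h1
  -- per-configuration expansion
  have key : ∀ f : E → ZMod q,
      Real.exp (β * ((Finset.univ.filter fun x => δ1 f x = 0).card : ℝ)) =
        ∑ S : Finset U, (if ∀ x ∈ S, δ1 f x = 0 then (Real.exp β - 1) ^ S.card else 0) := by
    intro f
    have h1 : Real.exp (β * ((Finset.univ.filter fun x => δ1 f x = 0).card : ℝ)) =
        ∏ x : U, ((if δ1 f x = 0 then Real.exp β - 1 else 0) + 1) := by
      have : ∀ x : U, ((if δ1 f x = 0 then Real.exp β - 1 else 0) + 1)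
          = (if δ1 f x = 0 then Real.exp β else 1) := by
        intro x; split <;> ring
      rw [Finset.prod_congr rfl (fun x _ => this x), Finset.prod_ite,
        Finset.prod_const, Finset.prod_const, one_pow, mul_one,
        mul_comm, Real.exp_nat_mul]
    rw [h1, Finset.prod_add, Finset.powerset_univ]
    apply Finset.sum_congr rfl
    intro S _
    simp only [Finset.prod_const_one, mul_one]
    by_cases h : ∀ x ∈ S, δ1 f x = 0
    · rw [if_pos h, Finset.prod_congr rfl (fun x hx => if_pos (h x hx)),
        Finset.prod_const]
    · push_neg at h
      obtain ⟨x, hx, hne⟩ := h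
      have hz : (∏ i ∈ S, if δ1 f i = 0 then Real.exp β - 1 else 0) = 0 :=
        Finset.prod_eq_zero hx (if_neg hne)
      rw [hz, if_neg (by push_neg; exact ⟨x, hx, hne⟩)]
  -- sum over f of the indicator equals the card of Z S
  have hsum : ∀ S : Finset U,
      (∑ f : E → ZMod q, if ∀ x ∈ S, δ1 f x = 0 then (Real.exp β - 1) ^ S.card else 0)
        = (Real.exp β - 1) ^ S.card * (Nat.card (Z S) : ℝ) := by
    intro S
    rw [← Finset.sum_filter, Finset.sum_const, nsmul_eq_mul, mul_comm]
    congr 1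
    have : Nat.card (Z S) = (Finset.univ.filter (fun f : E → ZMod q => f ∈ Z S)).card := by
      rw [Nat.card_eq_fintype_card, Fintype.card_subtype]
    rw [this]
    have hfe : Finset.filter (fun f : E → ZMod q => ∀ x ∈ S, δ1 f x = 0) Finset.univ
        = Finset.filter (fun f : E → ZMod q => f ∈ Z S) Finset.univ :=
      Finset.filter_congr (fun f _ => by simp [hmem S f])
    rw [hfe]
  -- combine
  rw [Finset.sum_congr rfl (fun f _ => key f), Finset.sum_comm]
  rw [Finset.sum_congr rfl (fun S _ => hsum S)]
  rw [Finset.mul_sum]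
  apply Finset.sum_congr rfl
  intro S _
  rw [hcard S]
  have h1p : 1 - p = Real.exp (-β) := by rw [hp]; ring
  have hcle : S.card ≤ Fintype.card U := by
    simpa using Finset.card_le_card (Finset.subset_univ S)
  have hfac : Real.exp (β * Fintype.card U) * (p ^ S.card * (1 - p) ^ (Fintype.card U - S.card))
      = (Real.exp β - 1) ^ S.card := by
    rw [h1p, hp, mul_comm β, Real.exp_nat_mul]
    have hsplit : Real.exp β ^ Fintype.card U
        = Real.exp β ^ S.card * Real.exp β ^ (Fintype.card U - S.card) := by
      rw [← pow_add, Nat.add_sub_cancel' hcle]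
    rw [hsplit]
    have h3 : Real.exp β * Real.exp (-β) = 1 := by
      rw [← Real.exp_add, add_neg_cancel, Real.exp_zero]
    have h2 : Real.exp β * (1 - Real.exp (-β)) = Real.exp β - 1 := by
      rw [mul_sub, mul_one, h3]
    calc Real.exp β ^ S.card * Real.exp β ^ (Fintype.card U - S.card) *
          ((1 - Real.exp (-β)) ^ S.card * Real.exp (-β) ^ (Fintype.card U - S.card))
        = (Real.exp β * (1 - Real.exp (-β))) ^ S.card *
            (Real.exp β * Real.exp (-β)) ^ (Fintype.card U - S.card) := by
          rw [mul_pow, mul_pow]; ring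
      _ = (Real.exp β - 1) ^ S.card := by rw [h2, h3, one_pow, mul_one]
  rw [← hfac]
  ring
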